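/- Reduction to zero common randomness: suppose min{ R : (R,0) ∈ ∪_{q_{X,Z,Y}} S^{d.c.s.}(q_{X,Z,Y}) } − min{ R : (R,0) ∈ S^{r.c.s.} } = r > 0. Then for every R_c ∈ (0, r): min{ R : (R,R_c) ∈ ∪_{q_{X,Z,Y}} S^{d.c.s.}(q_{X,Z,Y}) } > min{ R : (R,R_c) ∈ S^{r.c.s.} }, where the union is over all distributions q_{X,Z,Y} compatible with (q_{X,Z}, q_{X,Y}). -/
import Mathlib


open scoped BigOperators
open Filter

namespace RCS

/-- `p` is a probability mass function on the finite type `S`. -/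
def IsPMF {S : Type*} [Fintype S] (p : S → ℝ) : Prop :=
  (∀ s, 0 ≤ p s) ∧ ∑ s, p s = 1

/-- `k` is a conditional probability kernel from `A` to `B`. -/
def IsKernel {A B : Type*} [Fintype B] (k : A → B → ℝ) : Prop :=
  ∀ a, IsPMF (k a)

/-- Total variation distance between two pmfs on a finite type. -/
noncomputable def TV {S : Type*} [Fintype S] (p q : S → ℝ) : ℝ :=
  (1 / 2) * ∑ s, |p s - q s|

/-- Shannon mutual information (in nats) of a joint pmf given in curried form,
with the convention `0·log(0/x) = 0` (automatic since `Real.log 0 = 0`). -/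
noncomputable def MI {U V : Type*} [Fintype U] [Fintype V] (p : U → V → ℝ) : ℝ :=
  ∑ u, ∑ v, p u v * Real.log (p u v / ((∑ v', p u v') * (∑ u', p u' v)))

/-- Markov chain `X − Z − W − Y` for a joint distribution `p` on `𝒳×𝒵×𝒲×𝒴`:
`p(x,z,w,y) = p_Z(z)·p_{X|Z}(x|z)·p_{W|Z}(w|z)·p_{Y|W}(y|w)` for some kernels. -/
def MarkovXZWY {X Z W Y : Type*} [Fintype X] [Fintype Z] [Fintype W] [Fintype Y]
    (p : X → Z → W → Y → ℝ) : Prop :=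
  ∃ (kX : Z → X → ℝ) (kW : Z → W → ℝ) (kY : W → Y → ℝ),
    IsKernel kX ∧ IsKernel kW ∧ IsKernel kY ∧
    ∀ x z w y, p x z w y =
      (∑ x', ∑ w', ∑ y', p x' z w' y') * kX z x * kW z w * kY w y

/-- The single-letter region `S^{r.c.s.}` for remote channel synthesis. -/
def Srcs {X Z Y : Type*} [Fintype X] [Fintype Z] [Fintype Y]
    (qXZ : X → Z → ℝ) (qXY : X → Y → ℝ) : Set (ℝ × ℝ) :=
  { RRc | 0 ≤ RRc.1 ∧ 0 ≤ RRc.2 ∧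
    ∃ (W : Type) (hW : Fintype W),
      letI := hW
      Fintype.card W ≤ Fintype.card Y * Fintype.card Z + 1 ∧
      ∃ p : X → Z → W → Y → ℝ,
        IsPMF (fun s : X × Z × W × Y => p s.1 s.2.1 s.2.2.1 s.2.2.2) ∧
        (∀ x z, (∑ w, ∑ y, p x z w y) = qXZ x z) ∧
        (∀ x y, (∑ z, ∑ w, p x z w y) = qXY x y) ∧
        MarkovXZWY p ∧
        MI (fun z w => ∑ x, ∑ y, p x z w y) ≤ RRc.1 ∧
        MI (fun (xy : X × Y) w => ∑ z, p xy.1 z w xy.2) ≤ RRc.1 + RRc.2 }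

/-- A distribution `q` on `𝒳×𝒵×𝒴` is compatible with `(q_{X,Z}, q_{X,Y})`:
its `(X,Z)`-marginal is `q_{X,Z}`, its `(X,Y)`-marginal is `q_{X,Y}`, and it
satisfies the Markov chain `X − Z − Y`, i.e.
`q(x,z,y) = q_Z(z)·q_{X|Z}(x|z)·q_{Y|Z}(y|z)` for some kernels. -/
def Compatible {X Z Y : Type*} [Fintype X] [Fintype Z] [Fintype Y]
    (qXZ : X → Z → ℝ) (qXY : X → Y → ℝ) (q : X → Z → Y → ℝ) : Prop :=
  (∀ x z, (∑ y, q x z y) = qXZ x z) ∧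
  (∀ x y, (∑ z, q x z y) = qXY x y) ∧
  ∃ (kX : Z → X → ℝ) (kY : Z → Y → ℝ),
    IsKernel kX ∧ IsKernel kY ∧
    ∀ x z y, q x z y = (∑ x', ∑ y', q x' z y') * kX z x * kY z y

/-- The direct-channel-synthesis region `S^{d.c.s.}(q_{X,Z,Y})`. -/
def Sdcs {X Z Y : Type*} [Fintype X] [Fintype Z] [Fintype Y]
    (q : X → Z → Y → ℝ) : Set (ℝ × ℝ) :=
  { RRc | 0 ≤ RRc.1 ∧ 0 ≤ RRc.2 ∧
    ∃ (W : Type) (hW : Fintype W),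
      letI := hW
      Fintype.card W ≤ Fintype.card Y * Fintype.card Z + 1 ∧
      ∃ p : X → Z → W → Y → ℝ,
        IsPMF (fun s : X × Z × W × Y => p s.1 s.2.1 s.2.2.1 s.2.2.2) ∧
        (∀ x z y, (∑ w, p x z w y) = q x z y) ∧
        MarkovXZWY p ∧
        MI (fun z w => ∑ x, ∑ y, p x z w y) ≤ RRc.1 ∧
        MI (fun (zy : Z × Y) w => ∑ x, p x zy.1 w zy.2) ≤ RRc.1 + RRc.2 }

/-- Reduction to zero common randomness: suppose
`min{R : (R,0) ∈ ∪ S^{d.c.s.}} − min{R : (R,0) ∈ S^{r.c.s.}} = r > 0` (with both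
slice sets nonempty). Then for every `R_c ∈ (0,r)`,
`min{R : (R,R_c) ∈ ∪ S^{d.c.s.}} > min{R : (R,R_c) ∈ S^{r.c.s.}}`, the union
being over all distributions `q_{X,Z,Y}` compatible with `(q_{X,Z},q_{X,Y})`. -/
theorem reduction_to_zero_common_randomness
    {X Z Y : Type*} [Fintype X] [Fintype Z] [Fintype Y]
    (qXZ : X → Z → ℝ) (qXY : X → Y → ℝ)
    (hqXZ : IsPMF (fun s : X × Z => qXZ s.1 s.2))
    (hqXY : IsPMF (fun s : X × Y => qXY s.1 s.2))
    (r : ℝ) (hr : 0 < r)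
    (hne_dcs : {R : ℝ | ∃ q : X → Z → Y → ℝ,
        Compatible qXZ qXY q ∧ (R, (0 : ℝ)) ∈ Sdcs q}.Nonempty)
    (hne_rcs : {R : ℝ | (R, (0 : ℝ)) ∈ Srcs qXZ qXY}.Nonempty)
    (hgap : sInf {R : ℝ | ∃ q : X → Z → Y → ℝ,
          Compatible qXZ qXY q ∧ (R, (0 : ℝ)) ∈ Sdcs q}
        - sInf {R : ℝ | (R, (0 : ℝ)) ∈ Srcs qXZ qXY} = r) :
    ∀ Rc ∈ Set.Ioo (0 : ℝ) r,
      sInf {R : ℝ | (R, Rc) ∈ Srcs qXZ qXY} <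
        sInf {R : ℝ | ∃ q : X → Z → Y → ℝ,
          Compatible qXZ qXY q ∧ (R, Rc) ∈ Sdcs q} := by
  intro Rc hRcmem
  obtain ⟨hRc0, hRcr⟩ := hRcmem
  -- names for the four slice sets
  set A0 : Set ℝ := {R : ℝ | ∃ q : X → Z → Y → ℝ,
      Compatible qXZ qXY q ∧ (R, (0 : ℝ)) ∈ Sdcs q} with hA0def
  set ARc : Set ℝ := {R : ℝ | ∃ q : X → Z → Y → ℝ,
      Compatible qXZ qXY q ∧ (R, Rc) ∈ Sdcs q} with hARcdef
  set B0 : Set ℝ := {R : ℝ | (R, (0 : ℝ)) ∈ Srcs qXZ qXY} with hB0def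
  set BRc : Set ℝ := {R : ℝ | (R, Rc) ∈ Srcs qXZ qXY} with hBRcdef
  -- B0 ⊆ BRc
  have hBsub : B0 ⊆ BRc := by
    intro R hR
    obtain ⟨h1, h2, W, hW, hcard, p, hp, hm1, hm2, hmk, hI1, hI2⟩ := hR
    exact ⟨h1, le_of_lt hRc0, W, hW, hcard, p, hp, hm1, hm2, hmk, hI1,
      hI2.trans (by dsimp only at *; linarith)⟩
  -- A0 ⊆ ARc
  have hAsub : A0 ⊆ ARc := by
    rintro R ⟨q, hq, h1, h2, W, hW, hcard, p, hp, hm1, hmk, hI1, hI2⟩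
    exact ⟨q, hq, h1, le_of_lt hRc0, W, hW, hcard, p, hp, hm1, hmk, hI1,
      hI2.trans (by dsimp only at *; linarith)⟩
  -- shifting: R ∈ ARc → R + Rc ∈ A0
  have hshift : ∀ R ∈ ARc, R + Rc ∈ A0 := by
    rintro R ⟨q, hq, h1, h2, W, hW, hcard, p, hp, hm1, hmk, hI1, hI2⟩
    exact ⟨q, hq, by positivity, le_refl 0, W, hW, hcard, p, hp, hm1, hmk,
      hI1.trans (by dsimp only at *; linarith), hI2.trans (by dsimp only at *; linarith)⟩
  -- lower bounds by 0
  have hA0bdd : BddBelow A0 := ⟨0, by rintro R ⟨q, hq, h1, _⟩; exact h1⟩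
  have hARcbdd : BddBelow ARc := ⟨0, by rintro R ⟨q, hq, h1, _⟩; exact h1⟩
  have hBRcbdd : BddBelow BRc := ⟨0, by rintro R ⟨h1, _⟩; exact h1⟩
  have hARcne : ARc.Nonempty := hne_dcs.mono hAsub
  -- sInf BRc ≤ sInf B0
  have hB : sInf BRc ≤ sInf B0 := csInf_le_csInf hBRcbdd hne_rcs hBsub
  -- sInf A0 - Rc ≤ sInf ARc
  have hA : sInf A0 - Rc ≤ sInf ARc := by
    apply le_csInf hARcne
    intro R hR
    have : sInf A0 ≤ R + Rc := csInf_le hA0bdd (hshift R hR)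
    linarith
  linarith

end RCS
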